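/- Let d ≥ 2, let i satisfy 1 ≤ i ≤ d, let ε > 0, and let σ_ε : ℝ → ℝ be defined by σ_ε(u) = exp(−(2/√u)·arctan(ε/√u)) for u > 0 and σ_ε(u) = 0 for u ≤ 0. Define φ : (−ε², ε²) × ℝ^{d−1} → ℝ × ℝ^{d−1} × ℝ^{d−1} by φ(u; ε₂,…,ε_d) = ( u, (ε₂·σ_ε(u), …, ε_i·σ_ε(u), ε_{i+1}, …, ε_d), (ε₂, …, ε_i, ε_{i+1}·σ_ε(u), …, ε_d·σ_ε(u)) ). Then φ is C^∞, injective, its differential is injective at every point, and φ is a topological embedding onto its image (i.e. φ is a smooth embedding). -/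

import Mathlib

noncomputable section
open MvPolynomial Real Filter Set Topology

namespace Stmt14Aux

def Yf (u : ℝ) : ℝ := (Real.sqrt u)⁻¹
def Af (ε u : ℝ) : ℝ := Real.arctan (ε * Yf u)
def Rf (ε u : ℝ) : ℝ := (1 + ε ^ 2 * Yf u ^ 2)⁻¹
def Sf (ε u : ℝ) : ℝ := Real.exp (-(2 * Yf u * Af ε u))
def vf (ε u : ℝ) : Fin 3 → ℝ := ![Yf u, Af ε u, Rf ε u]

/-- generator derivative polynomials -/
def G (ε : ℝ) : Fin 3 → MvPolynomial (Fin 3) ℝ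
  | 0 => C (-(2:ℝ)⁻¹) * X 0 ^ 3
  | 1 => C (-(2:ℝ)⁻¹ * ε) * X 0 ^ 3 * X 2
  | 2 => C (ε ^ 2) * X 0 ^ 4 * X 2 ^ 2

def M : MvPolynomial (Fin 3) ℝ := X 0 ^ 3 * X 1
def M' (ε : ℝ) : MvPolynomial (Fin 3) ℝ := X 0 ^ 3 * X 1 + C ε * X 0 ^ 4 * X 2

def DP (ε : ℝ) (P : MvPolynomial (Fin 3) ℝ) : MvPolynomial (Fin 3) ℝ :=
  G ε 0 * pderiv 0 P + G ε 1 * pderiv 1 P + G ε 2 * pderiv 2 P + M' ε * P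

lemma one_add_pos (ε u : ℝ) : (0:ℝ) < 1 + ε ^ 2 * Yf u ^ 2 := by positivity

lemma hY {u : ℝ} (hu : 0 < u) : HasDerivAt Yf (-(2:ℝ)⁻¹ * Yf u ^ 3) u := by
  have hs : Real.sqrt u ≠ 0 := by positivity
  have := (Real.hasDerivAt_sqrt hu.ne').inv hs
  refine this.congr_deriv ?_
  symm
  rw [Yf, inv_pow]
  rw [show Real.sqrt u ^ 3 = Real.sqrt u ^ 2 * Real.sqrt u by ring]
  field_simp

lemma hA (ε : ℝ) {u : ℝ} (hu : 0 < u) :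
    HasDerivAt (Af ε) (-(2:ℝ)⁻¹ * ε * Yf u ^ 3 * Rf ε u) u := by
  have := (Real.hasDerivAt_arctan (ε * Yf u)).comp u ((hY hu).const_mul ε)
  refine this.congr_deriv ?_
  symm
  rw [Rf, mul_pow, one_div]
  ring

lemma hR (ε : ℝ) {u : ℝ} (hu : 0 < u) :
    HasDerivAt (Rf ε) (ε ^ 2 * Yf u ^ 4 * Rf ε u ^ 2) u := by
  have hinner : HasDerivAt (fun u => 1 + ε ^ 2 * Yf u ^ 2)
      (ε ^ 2 * (2 * Yf u ^ 1 * (-(2:ℝ)⁻¹ * Yf u ^ 3))) u := by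
    exact (((hY hu).pow 2).const_mul (ε ^ 2)).const_add 1
  have := hinner.inv (one_add_pos ε u).ne'
  refine this.congr_deriv ?_
  symm
  rw [Rf, inv_pow]
  field_simp

lemma hS (ε : ℝ) {u : ℝ} (hu : 0 < u) :
    HasDerivAt (Sf ε) ((Yf u ^ 3 * Af ε u + ε * Yf u ^ 4 * Rf ε u) * Sf ε u) u := by
  have hinner : HasDerivAt (fun u => -(2 * Yf u * Af ε u))
      (-(2 * (-(2:ℝ)⁻¹ * Yf u ^ 3) * Af ε u + 2 * Yf u * (-(2:ℝ)⁻¹ * ε * Yf u ^ 3 * Rf ε u))) u :=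
    (((hY hu).const_mul 2).mul (hA ε hu)).neg
  have := hinner.exp
  refine this.congr_deriv ?_
  symm
  rw [Sf]; ring

end Stmt14Aux

namespace Stmt14Aux

lemma hv (ε : ℝ) {u : ℝ} (hu : 0 < u) (i : Fin 3) :
    HasDerivAt (fun u => vf ε u i) (eval (vf ε u) (G ε i)) u := by
  fin_cases i
  · simpa [vf, G, eval_mul, eval_pow] using hY hu
  · simpa [vf, G, eval_mul, eval_pow] using hA ε hu
  · simpa [vf, G, eval_mul, eval_pow] using hR ε hu

lemma vf0 (ε u : ℝ) : vf ε u 0 = Yf u := rfl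
lemma vf1 (ε u : ℝ) : vf ε u 1 = Af ε u := rfl
lemma vf2 (ε u : ℝ) : vf ε u 2 = Rf ε u := rfl

lemma DP_mul_X (ε : ℝ) (P : MvPolynomial (Fin 3) ℝ) (i : Fin 3) :
    DP ε (P * X i) = DP ε P * X i + G ε i * P := by
  fin_cases i <;>
    · simp only [DP, pderiv_mul, pderiv_X, Pi.single_apply, G, M']
      norm_num [Fin.ext_iff]
      ring

lemma hFP (ε : ℝ) (P : MvPolynomial (Fin 3) ℝ) {u : ℝ} (hu : 0 < u) :
    HasDerivAt (fun u => eval (vf ε u) P * Sf ε u) (eval (vf ε u) (DP ε P) * Sf ε u) u := by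
  induction P using MvPolynomial.induction_on with
  | C a =>
    have h1 : (fun u => eval (vf ε u) (C a) * Sf ε u) = fun u => a * Sf ε u := by
      funext w; rw [eval_C]
    rw [h1]
    refine ((hS ε hu).const_mul a).congr_deriv ?_
    symm
    simp only [DP, M', pderiv_C, mul_zero, zero_add, eval_add, eval_mul, eval_pow, eval_X,
      eval_C, vf0, vf1, vf2, zero_mul, add_zero]
    ring
  | add p q hp hq =>
    have h1 : (fun u => eval (vf ε u) (p + q) * Sf ε u)
        = fun u => eval (vf ε u) p * Sf ε u + eval (vf ε u) q * Sf ε u := by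
      funext w; rw [eval_add]; ring
    rw [h1]
    refine (hp.add hq).congr_deriv ?_
    symm
    have h2 : DP ε (p + q) = DP ε p + DP ε q := by
      simp only [DP, map_add, mul_add]; ring
    rw [h2, eval_add]; ring
  | mul_X p i hp =>
    have h1 : (fun u => eval (vf ε u) (p * X i) * Sf ε u)
        = fun u => eval (vf ε u) p * Sf ε u * vf ε u i := by
      funext w; rw [eval_mul, eval_X]; ring
    rw [h1]
    refine (hp.mul (hv ε hu i)).congr_deriv ?_
    symm
    rw [DP_mul_X, eval_add, eval_mul, eval_mul, eval_X]
    ring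

end Stmt14Aux

namespace Stmt14Aux

lemma hYtop : Tendsto Yf (𝓝[>] (0:ℝ)) atTop := by
  have h1 : Tendsto Real.sqrt (𝓝[>] (0:ℝ)) (𝓝[>] 0) := by
    apply tendsto_nhdsWithin_of_tendsto_nhds_of_eventually_within
    · simpa using (Real.continuous_sqrt.tendsto 0).mono_left nhdsWithin_le_nhds
    · filter_upwards [self_mem_nhdsWithin] with u hu
      exact Real.sqrt_pos.2 hu
  exact tendsto_inv_nhdsGT_zero.comp h1

lemma hAtend {ε : ℝ} (hε : 0 < ε) :
    Tendsto (Af ε) (𝓝[>] (0:ℝ)) (𝓝 (Real.pi / 2)) :=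
  (Real.tendsto_arctan_atTop.mono_right nhdsWithin_le_nhds).comp (hYtop.const_mul_atTop hε)

lemma hA1 {ε : ℝ} (hε : 0 < ε) : ∀ᶠ u in 𝓝[>] (0:ℝ), 1 ≤ Af ε u := by
  have h12 : (1:ℝ) < Real.pi / 2 := by
    have := Real.pi_gt_three; linarith
  exact (hAtend hε).eventually (eventually_ge_nhds h12)

lemma Yf_nonneg (u : ℝ) : 0 ≤ Yf u := by
  rw [Yf]; positivity

lemma tendstoFk {ε : ℝ} (hε : 0 < ε) (P : MvPolynomial (Fin 3) ℝ) :
    ∀ k : ℕ, Tendsto (fun u => eval (vf ε u) P * Yf u ^ k * Sf ε u) (𝓝[>] (0:ℝ)) (𝓝 0) := by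
  induction P using MvPolynomial.induction_on with
  | C a =>
    intro k
    have hg : Tendsto (fun u => |a| * (Yf u ^ k * Real.exp (-Yf u))) (𝓝[>] (0:ℝ)) (𝓝 0) := by
      have := ((tendsto_pow_mul_exp_neg_atTop_nhds_zero k).comp hYtop).const_mul |a|
      simpa using this
    apply squeeze_zero_norm' _ hg
    filter_upwards [hA1 hε] with u h1
    have hy0 : 0 ≤ Yf u := Yf_nonneg u
    have hSle : Sf ε u ≤ Real.exp (-Yf u) := by
      rw [Sf]; apply Real.exp_le_exp.2; nlinarith
    calc ‖eval (vf ε u) (C a) * Yf u ^ k * Sf ε u‖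
        = |a| * (Yf u ^ k * Sf ε u) := by
          rw [eval_C, Real.norm_eq_abs, abs_mul, abs_mul, abs_of_nonneg (pow_nonneg hy0 _),
            show |Sf ε u| = Sf ε u from abs_of_pos (Real.exp_pos _)]
          ring
      _ ≤ |a| * (Yf u ^ k * Real.exp (-Yf u)) := by
          apply mul_le_mul_of_nonneg_left _ (abs_nonneg a)
          exact mul_le_mul_of_nonneg_left hSle (pow_nonneg hy0 k)
  | add p q hp hq =>
    intro k
    have := (hp k).add (hq k)
    rw [add_zero] at this
    refine Tendsto.congr (fun u => ?_) this
    rw [eval_add]; ring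
  | mul_X p i hp =>
    intro k
    fin_cases i <;> simp only [Fin.zero_eta, Fin.mk_one, Fin.reduceFinMk]
    · refine Tendsto.congr (fun u => ?_) (hp (k + 1))
      rw [eval_mul, eval_X, vf0, pow_succ]; ring
    · have hn := (hp k).norm
      rw [norm_zero] at hn
      have hg := hn.const_mul (Real.pi / 2)
      rw [mul_zero] at hg
      apply squeeze_zero_norm' _ hg
      filter_upwards with u
      have h1 : (eval (vf ε u) (p * X 1)) * Yf u ^ k * Sf ε u
          = Af ε u * (eval (vf ε u) p * Yf u ^ k * Sf ε u) := by
        rw [eval_mul, eval_X, vf1]; ring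
      rw [h1, norm_mul]
      apply mul_le_mul_of_nonneg_right _ (norm_nonneg _)
      rw [Real.norm_eq_abs, abs_le]
      exact ⟨(Real.neg_pi_div_two_lt_arctan _).le, (Real.arctan_lt_pi_div_two _).le⟩
    · have hn := (hp k).norm
      rw [norm_zero] at hn
      apply squeeze_zero_norm' _ hn
      filter_upwards with u
      have h1 : (eval (vf ε u) (p * X 2)) * Yf u ^ k * Sf ε u
          = Rf ε u * (eval (vf ε u) p * Yf u ^ k * Sf ε u) := by
        rw [eval_mul, eval_X, vf2]; ring
      rw [h1, norm_mul]
      have hR1 : |Rf ε u| ≤ 1 := by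
        rw [Rf, abs_of_pos (by positivity)]
        apply inv_le_one_of_one_le₀
        nlinarith [sq_nonneg (ε * Yf u), sq_nonneg (Yf u), sq_nonneg ε, mul_pow ε (Yf u) 2]
      calc |Rf ε u| * ‖eval (vf ε u) p * Yf u ^ k * Sf ε u‖
          ≤ 1 * ‖eval (vf ε u) p * Yf u ^ k * Sf ε u‖ :=
            mul_le_mul_of_nonneg_right hR1 (norm_nonneg _)
        _ = ‖eval (vf ε u) p * Yf u ^ k * Sf ε u‖ := one_mul _

end Stmt14Aux

namespace Stmt14Aux

def Ff (ε : ℝ) (P : MvPolynomial (Fin 3) ℝ) (u : ℝ) : ℝ :=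
  if 0 < u then eval (vf ε u) P * Sf ε u else 0

lemma hasDerivAt_Ff {ε : ℝ} (hε : 0 < ε) (P : MvPolynomial (Fin 3) ℝ) (u : ℝ) :
    HasDerivAt (Ff ε P) (Ff ε (DP ε P) u) u := by
  rcases lt_trichotomy u 0 with hu | rfl | hu
  · rw [show Ff ε (DP ε P) u = 0 from if_neg (not_lt.2 hu.le)]
    refine (hasDerivAt_const u 0).congr_of_eventuallyEq ?_
    filter_upwards [gt_mem_nhds hu] with y hy
    exact if_neg (not_lt.2 hy.le)
  · rw [show Ff ε (DP ε P) 0 = 0 from if_neg (lt_irrefl 0)]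
    rw [hasDerivAt_iff_tendsto_slope, ← nhdsLT_sup_nhdsGT, tendsto_sup]
    constructor
    · refine Tendsto.congr' ?_ tendsto_const_nhds
      filter_upwards [self_mem_nhdsWithin] with y (hy : y < 0)
      simp [slope_def_field, Ff, not_lt.2 hy.le]
    · refine Tendsto.congr' ?_ (tendstoFk hε P 2)
      filter_upwards [self_mem_nhdsWithin] with y (hy : 0 < y)
      have h2 : Yf y ^ 2 = y⁻¹ := by
        rw [Yf, inv_pow, Real.sq_sqrt hy.le]
      rw [slope_def_field, Ff, if_pos hy, Ff, if_neg (lt_irrefl 0)]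
      rw [h2]
      field_simp
      rw [sub_zero, sub_zero, mul_div_cancel_left₀ _ hy.ne']
  · rw [show Ff ε (DP ε P) u = eval (vf ε u) (DP ε P) * Sf ε u from if_pos hu]
    refine (hFP ε P hu).congr_of_eventuallyEq ?_
    filter_upwards [lt_mem_nhds hu] with y hy
    exact if_pos hy

lemma contDiff_Ff {ε : ℝ} (hε : 0 < ε) (P : MvPolynomial (Fin 3) ℝ) (n : ℕ∞) :
    ContDiff ℝ n (Ff ε P) := by
  refine contDiff_all_iff_nat.2 (fun m => ?_) n
  induction m generalizing P with
  | zero =>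
    have hd : Differentiable ℝ (Ff ε P) := fun u => (hasDerivAt_Ff hε P u).differentiableAt
    exact contDiff_zero.2 hd.continuous
  | succ m ihm =>
    rw [show ((m + 1 : ℕ) : WithTop ℕ∞) = m + 1 from rfl]
    refine contDiff_succ_iff_deriv.2
      ⟨fun u => (hasDerivAt_Ff hε P u).differentiableAt, by simp, ?_⟩
    have hderiv : deriv (Ff ε P) = Ff ε (DP ε P) :=
      funext fun u => (hasDerivAt_Ff hε P u).deriv
    rw [hderiv]
    exact ihm _

end Stmt14Aux

namespace Stmt14Aux

def sel (d i : ℕ) (j : Fin (d - 1)) :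
    (ℝ × (Fin (d - 1) → ℝ) × (Fin (d - 1) → ℝ)) →L[ℝ] ℝ :=
  if j.val + 2 ≤ i then
    (ContinuousLinearMap.proj j).comp
      ((ContinuousLinearMap.snd ℝ (Fin (d - 1) → ℝ) (Fin (d - 1) → ℝ)).comp
        (ContinuousLinearMap.snd ℝ ℝ ((Fin (d - 1) → ℝ) × (Fin (d - 1) → ℝ))))
  else
    (ContinuousLinearMap.proj j).comp
      ((ContinuousLinearMap.fst ℝ (Fin (d - 1) → ℝ) (Fin (d - 1) → ℝ)).comp
        (ContinuousLinearMap.snd ℝ ℝ ((Fin (d - 1) → ℝ) × (Fin (d - 1) → ℝ))))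

def psiL (d i : ℕ) :
    (ℝ × (Fin (d - 1) → ℝ) × (Fin (d - 1) → ℝ)) →L[ℝ] ℝ × (Fin (d - 1) → ℝ) :=
  (ContinuousLinearMap.fst ℝ ℝ ((Fin (d - 1) → ℝ) × (Fin (d - 1) → ℝ))).prod
    (ContinuousLinearMap.pi (sel d i))

lemma psiL_apply (d i : ℕ) (x : ℝ × (Fin (d - 1) → ℝ) × (Fin (d - 1) → ℝ)) :
    psiL d i x = (x.1, fun j => if j.val + 2 ≤ i then x.2.2 j else x.2.1 j) := by
  refine Prod.ext rfl ?_
  funext j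
  by_cases hj : j.val + 2 ≤ i <;>
    simp [psiL, sel, hj]

end Stmt14Aux

open Stmt14Aux in
/-- Let `d ≥ 2`, `1 ≤ i ≤ d`, `ε > 0`, and let `σ_ε : ℝ → ℝ` be
`exp(−(2/√u)·arctan(ε/√u))` for `u > 0` and `0` for `u ≤ 0`.  The gluing map
`φ : (−ε², ε²) × ℝ^{d−1} → ℝ × ℝ^{d−1} × ℝ^{d−1}`,
`φ(u; ε₂,…,ε_d) = (u, (ε₂σ_ε(u),…,ε_iσ_ε(u), ε_{i+1},…,ε_d), (ε₂,…,ε_i, ε_{i+1}σ_ε(u),…,ε_dσ_ε(u)))`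
is `C^∞`, injective on its domain, has injective differential at every point of its
domain, and restricts to a topological embedding of its domain onto its image.
Coordinates of `ℝ^{d−1}` are indexed by `j : Fin (d−1)`, with `j` corresponding to the
classical index `j + 2 ∈ {2,…,d}`. -/
theorem stmt14 (d i : ℕ) (hd : 2 ≤ d) (hi1 : 1 ≤ i) (hid : i ≤ d)
    (ε : ℝ) (hε : 0 < ε) (σ : ℝ → ℝ)
    (hσ : ∀ u : ℝ, σ u =
      if 0 < u then Real.exp (-(2 / Real.sqrt u * Real.arctan (ε / Real.sqrt u))) else 0)
    (φ : ℝ × (Fin (d - 1) → ℝ) → ℝ × (Fin (d - 1) → ℝ) × (Fin (d - 1) → ℝ))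
    (hφ : ∀ p : ℝ × (Fin (d - 1) → ℝ), φ p =
      (p.1,
        fun j : Fin (d - 1) => if j.val + 2 ≤ i then p.2 j * σ p.1 else p.2 j,
        fun j : Fin (d - 1) => if j.val + 2 ≤ i then p.2 j else p.2 j * σ p.1)) :
    ContDiffOn ℝ (⊤ : ℕ∞) φ (Set.Ioo (-ε ^ 2) (ε ^ 2) ×ˢ Set.univ)
    ∧ Set.InjOn φ (Set.Ioo (-ε ^ 2) (ε ^ 2) ×ˢ Set.univ)
    ∧ (∀ p ∈ Set.Ioo (-ε ^ 2) (ε ^ 2) ×ˢ (Set.univ : Set (Fin (d - 1) → ℝ)),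
        Function.Injective (fderiv ℝ φ p))
    ∧ Topology.IsEmbedding
        ((Set.Ioo (-ε ^ 2) (ε ^ 2) ×ˢ (Set.univ : Set (Fin (d - 1) → ℝ))).restrict φ) := by
  classical
  have hσeq : σ = Ff ε 1 := by
    funext u
    rw [hσ u, Ff]
    by_cases hu : 0 < u
    · rw [if_pos hu, if_pos hu, map_one, one_mul, Sf, Af, Yf, div_eq_mul_inv, div_eq_mul_inv]
    · rw [if_neg hu, if_neg hu]
  have hσsmooth : ContDiff ℝ (⊤ : ℕ∞) σ := by
    rw [hσeq]; exact contDiff_Ff hε 1 ⊤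
  have hφeq : φ = fun p => (p.1,
      fun j : Fin (d - 1) => if j.val + 2 ≤ i then p.2 j * σ p.1 else p.2 j,
      fun j : Fin (d - 1) => if j.val + 2 ≤ i then p.2 j else p.2 j * σ p.1) := funext hφ
  have hbase : ∀ j : Fin (d - 1),
      ContDiff ℝ (⊤ : ℕ∞) (fun p : ℝ × (Fin (d - 1) → ℝ) => p.2 j) :=
    fun j => contDiff_pi.1 contDiff_snd j
  have hmul : ∀ j : Fin (d - 1),
      ContDiff ℝ (⊤ : ℕ∞) (fun p : ℝ × (Fin (d - 1) → ℝ) => p.2 j * σ p.1) :=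
    fun j => (hbase j).mul (hσsmooth.comp contDiff_fst)
  have hφsmooth : ContDiff ℝ (⊤ : ℕ∞) φ := by
    rw [hφeq]
    refine contDiff_fst.prodMk (ContDiff.prodMk ?_ ?_) <;>
      refine contDiff_pi.2 fun j => ?_ <;>
      by_cases hj : j.val + 2 ≤ i <;>
      simp only [hj, if_true, if_false] <;>
      first
        | exact hmul j
        | exact hbase j
  have hψφ : ∀ p : ℝ × (Fin (d - 1) → ℝ), psiL d i (φ p) = p := by
    intro p
    rw [hφ p, psiL_apply]
    refine Prod.ext rfl ?_
    funext j
    by_cases hj : j.val + 2 ≤ i <;> simp [hj]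
  refine ⟨hφsmooth.contDiffOn, ?_, ?_, ?_⟩
  · intro p _ q _ h
    have := congrArg (psiL d i) h
    rwa [hψφ, hψφ] at this
  · intro p _
    have hA : HasFDerivAt (⇑(psiL d i) ∘ φ) ((psiL d i).comp (fderiv ℝ φ p)) p :=
      (psiL d i).hasFDerivAt.comp p
        ((hφsmooth.differentiable (by simp)) p).hasFDerivAt
    have hB : HasFDerivAt (⇑(psiL d i) ∘ φ)
        (ContinuousLinearMap.id ℝ (ℝ × (Fin (d - 1) → ℝ))) p := by
      rw [show ⇑(psiL d i) ∘ φ = id from funext hψφ]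
      exact hasFDerivAt_id p
    have h1 := hA.unique hB
    intro v w hvw
    have h2 := congrArg (psiL d i) hvw
    have h3 : ∀ z, psiL d i (fderiv ℝ φ p z) = z := fun z => by
      have := DFunLike.congr_fun h1 z
      simpa using this
    rw [← h3 v, ← h3 w, h2]
  · apply Topology.IsEmbedding.of_comp
      (show Continuous ((Set.Ioo (-ε ^ 2) (ε ^ 2) ×ˢ
          (Set.univ : Set (Fin (d - 1) → ℝ))).restrict φ) from
        hφsmooth.continuous.comp continuous_subtype_val)
      (psiL d i).continuous
    rw [show ⇑(psiL d i) ∘ (Set.Ioo (-ε ^ 2) (ε ^ 2) ×ˢ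
        (Set.univ : Set (Fin (d - 1) → ℝ))).restrict φ = Subtype.val from
      funext fun x => hψφ x.1]
    exact Topology.IsEmbedding.subtypeVal
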